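/- For all integers d1 ≥ 3 and d2 ≥ 5, the polynomial inequality d1(d2−2)(d1+d2)(d2−4)² > 2·d2²·(d1+d2−2)² holds if and only if both √(2(d1+d2−2)/(d1·(d2−4))) < 1 and C(d1,d2) < D(d1,d2) hold. -/

import Mathlib

/-- Lower endpoint `C(d1,d2)`. -/
noncomputable def Cval (d1 d2 : ℕ) : ℝ :=
  (d1 : ℝ) / (d1 + d2 * (1 - Real.sqrt (2 * ((d1 : ℝ) + d2) / (d1 * ((d2 : ℝ) - 2))))⁻¹)

/-- Lower endpoint `D(d1,d2)`. -/
noncomputable def Dval (d1 d2 : ℕ) : ℝ :=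
  (d1 : ℝ) / (d1 + ((d2 : ℝ) - 2) *
    (1 - Real.sqrt (2 * ((d1 : ℝ) + d2 - 2) / (d1 * ((d2 : ℝ) - 4))))⁻¹)

private lemma aux_poly_iff_sqrt (a b : ℝ) (ha : 3 ≤ a) (hb : 5 ≤ b) :
    a * (b - 2) * (a + b) * (b - 4) ^ 2 > 2 * b ^ 2 * (a + b - 2) ^ 2 ↔
      b * Real.sqrt (2 * (a + b - 2) / (a * (b - 4))) <
        (b - 2) * Real.sqrt (2 * (a + b) / (a * (b - 2))) + 2 := by
  have ha0 : (0:ℝ) < a := by linarith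
  have hb2 : (0:ℝ) < b - 2 := by linarith
  have hb4 : (0:ℝ) < b - 4 := by linarith
  have hb0 : (0:ℝ) < b := by linarith
  set x := 2 * (a + b) / (a * (b - 2)) with hxdef
  set y := 2 * (a + b - 2) / (a * (b - 4)) with hydef
  have hx : 0 < x := by
    rw [hxdef]; positivity
  have hy : 0 < y := by
    rw [hydef]
    have : (0:ℝ) < a + b - 2 := by linarith
    positivity
  have hsx : 0 ≤ Real.sqrt x := Real.sqrt_nonneg x
  have hsqx : Real.sqrt x ^ 2 = x := Real.sq_sqrt hx.le
  have h1 : b * Real.sqrt y = Real.sqrt (b ^ 2 * y) := by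
    rw [Real.sqrt_mul (by positivity) y, Real.sqrt_sq hb0.le]
  have hrhs : 0 < (b - 2) * Real.sqrt x + 2 := by positivity
  rw [h1, Real.sqrt_lt' hrhs]
  have hexp : ((b - 2) * Real.sqrt x + 2) ^ 2
      = (b - 2) ^ 2 * x + 4 * (b - 2) * Real.sqrt x + 4 := by
    linear_combination (b - 2) ^ 2 * hsqx
  rw [hexp]
  have hR : b ^ 2 * y - (b - 2) ^ 2 * x - 4 = 8 * b * (a + b - 2) / (a * (b - 4)) := by
    rw [hxdef, hydef]
    field_simp
    ring
  set c := 2 * b * (a + b - 2) / (a * (b - 4) * (b - 2)) with hcdef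
  have hc : (0:ℝ) ≤ c := by
    rw [hcdef]
    have : (0:ℝ) < a + b - 2 := by linarith
    positivity
  have hid : 4 * (b - 2) * c = 8 * b * (a + b - 2) / (a * (b - 4)) := by
    rw [hcdef]; field_simp; ring
  have hkey : c < Real.sqrt x ↔
      a * (b - 2) * (a + b) * (b - 4) ^ 2 > 2 * b ^ 2 * (a + b - 2) ^ 2 := by
    rw [Real.lt_sqrt hc, hcdef, hxdef, div_pow, div_lt_div_iff₀ (by positivity) (by positivity)]
    constructor
    · intro h
      nlinarith [h, mul_pos ha0 hb2, mul_pos (mul_pos ha0 hb2) hb2]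
    · intro h
      nlinarith [mul_lt_mul_of_pos_left h (show (0:ℝ) < 2 * a * (b - 2) by positivity)]
  constructor
  · intro hpoly
    have hlt : c < Real.sqrt x := hkey.mpr hpoly
    have := mul_lt_mul_of_pos_left hlt (show (0:ℝ) < 4 * (b - 2) by positivity)
    rw [hid] at this
    linarith [hR, this]
  · intro h
    apply hkey.mp
    have h4 : 4 * (b - 2) * c < 4 * (b - 2) * Real.sqrt x := by
      rw [hid]; linarith [hR]
    exact lt_of_mul_lt_mul_left h4 (by positivity)

private lemma aux_CD_iff (a b s t : ℝ) (ha : 0 < a) (hb2 : 0 < b - 2)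
    (hs : 0 ≤ s) (hst : s < t) (ht : t < 1) :
    a / (a + b * (1 - s)⁻¹) < a / (a + (b - 2) * (1 - t)⁻¹) ↔
      b * t < (b - 2) * s + 2 := by
  have h1t : 0 < 1 - t := by linarith
  have h1s : 0 < 1 - s := by linarith
  have hb0 : (0:ℝ) < b := by linarith
  have hP : 0 < a + b * (1 - s)⁻¹ := by positivity
  have hQ : 0 < a + (b - 2) * (1 - t)⁻¹ := by positivity
  rw [div_lt_div_iff_of_pos_left ha hP hQ, add_lt_add_iff_left, ← div_eq_mul_inv, ← div_eq_mul_inv,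
    div_lt_div_iff₀ h1t h1s]
  constructor <;> intro h <;> nlinarith [h]

private lemma aux_poly_imp_Q1 (a b : ℝ) (ha : 3 ≤ a) (hb : 5 ≤ b)
    (hpoly : a * (b - 2) * (a + b) * (b - 4) ^ 2 > 2 * b ^ 2 * (a + b - 2) ^ 2) :
    2 * (a + b - 2) < a * (b - 4) := by
  have h1 : (b - 2) * (b - 4) * (a + b) < b ^ 2 * (a + b - 2) := by nlinarith
  by_contra h
  push_neg at h
  nlinarith [mul_le_mul_of_nonneg_right h
      (show (0:ℝ) ≤ (b - 2) * (a + b) * (b - 4) by nlinarith),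
    mul_lt_mul_of_pos_left h1 (show (0:ℝ) < 2 * (a + b - 2) by nlinarith)]

theorem poly_iff_D_pos_and_C_lt_D (d1 d2 : ℕ) (hd1 : 3 ≤ d1) (hd2 : 5 ≤ d2) :
    (d1 : ℝ) * ((d2 : ℝ) - 2) * ((d1 : ℝ) + d2) * ((d2 : ℝ) - 4) ^ 2 >
        2 * (d2 : ℝ) ^ 2 * ((d1 : ℝ) + d2 - 2) ^ 2 ↔
      Real.sqrt (2 * ((d1 : ℝ) + d2 - 2) / (d1 * ((d2 : ℝ) - 4))) < 1 ∧
        Cval d1 d2 < Dval d1 d2 := by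
  have ha : (3:ℝ) ≤ (d1 : ℝ) := by exact_mod_cast hd1
  have hb : (5:ℝ) ≤ (d2 : ℝ) := by exact_mod_cast hd2
  set a := (d1 : ℝ)
  set b := (d2 : ℝ)
  have ha0 : (0:ℝ) < a := by linarith
  have hb2 : (0:ℝ) < b - 2 := by linarith
  have hb4 : (0:ℝ) < b - 4 := by linarith
  set x := 2 * (a + b) / (a * (b - 2)) with hxdef
  set y := 2 * (a + b - 2) / (a * (b - 4)) with hydef
  have hx : 0 < x := by rw [hxdef]; positivity
  have hxy : x < y := by
    rw [hxdef, hydef, div_lt_div_iff₀ (by positivity) (by positivity)]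
    nlinarith
  have hst : Real.sqrt x < Real.sqrt y := Real.sqrt_lt_sqrt hx.le hxy
  have hty : Real.sqrt y < 1 ↔ 2 * (a + b - 2) < a * (b - 4) := by
    rw [Real.sqrt_lt' one_pos, one_pow, hydef, div_lt_one (by positivity)]
  have hCD : Cval d1 d2 = a / (a + b * (1 - Real.sqrt x)⁻¹) := by
    rw [Cval]
  have hDD : Dval d1 d2 = a / (a + (b - 2) * (1 - Real.sqrt y)⁻¹) := by
    rw [Dval]
  constructor
  · intro hpoly
    have hQ1 : 2 * (a + b - 2) < a * (b - 4) := aux_poly_imp_Q1 a b ha hb hpoly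
    have ht1 : Real.sqrt y < 1 := hty.mpr hQ1
    refine ⟨ht1, ?_⟩
    rw [hCD, hDD,
      aux_CD_iff a b (Real.sqrt x) (Real.sqrt y) ha0 hb2 (Real.sqrt_nonneg x) hst ht1]
    exact (aux_poly_iff_sqrt a b ha hb).mp hpoly
  · rintro ⟨ht1, hC⟩
    rw [hCD, hDD,
      aux_CD_iff a b (Real.sqrt x) (Real.sqrt y) ha0 hb2 (Real.sqrt_nonneg x) hst ht1] at hC
    exact (aux_poly_iff_sqrt a b ha hb).mpr hC
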